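/- For u smooth (C³) near t_n, the IQ-RBF Euler local truncation error τ(h) = (u(t_n+h) − (h(1+ε²h²)(2+ε²h²)u'(t_n) + 2u(t_n))/(2(1+ε²h²)))/h satisfies τ(h) = h(u''(t_n)/2 + ε²u(t_n)) + O(h²) as h → 0; in particular, if ε² = −u''(t_n)/(2u(t_n)) (with u(t_n) ≠ 0) then τ(h) = O(h²). -/

import Mathlib

open Filter Asymptotics

lemma isBigO_succ_of_deriv {g : ℝ → ℝ} (hg : Differentiable ℝ g) (h0 : g 0 = 0) {n : ℕ}
    (hd : deriv g =O[nhds 0] fun h => h ^ n) :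
    g =O[nhds 0] fun h : ℝ => h ^ (n + 1) := by
  rcases hd.exists_nonneg with ⟨C, hC, hbound⟩
  rw [isBigOWith_iff, Metric.eventually_nhds_iff] at hbound
  obtain ⟨δ, hδ, hBb⟩ := hbound
  rw [isBigO_iff]
  refine ⟨C, Metric.eventually_nhds_iff.mpr ⟨δ, hδ, fun h hh => ?_⟩⟩
  have habs : |h| < δ := by simpa [Real.dist_eq] using hh
  have key : ∀ x ∈ Metric.closedBall (0:ℝ) |h|, ‖deriv g x‖ ≤ C * |h| ^ n := by
    intro x hx
    have hx' : |x| ≤ |h| := by simpa [Real.dist_eq] using hx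
    have hxδ : dist x 0 < δ := by
      simp only [Real.dist_eq, sub_zero]; exact lt_of_le_of_lt hx' habs
    calc ‖deriv g x‖ ≤ C * ‖x ^ n‖ := hBb hxδ
      _ ≤ C * |h| ^ n := by
          rw [Real.norm_eq_abs, abs_pow]
          exact mul_le_mul_of_nonneg_left (pow_le_pow_left₀ (abs_nonneg x) hx' n) hC
  have hmvt := (convex_closedBall (0:ℝ) |h|).norm_image_sub_le_of_norm_deriv_le
      (fun x _ => hg x) key (Metric.mem_closedBall_self (abs_nonneg h))
      (show (h:ℝ) ∈ Metric.closedBall (0:ℝ) |h| by simp [Metric.mem_closedBall, Real.dist_eq])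
  calc ‖g h‖ = ‖g h - g 0‖ := by rw [h0, sub_zero]
    _ ≤ C * |h| ^ n * ‖h - 0‖ := hmvt
    _ = C * ‖h ^ (n+1)‖ := by
        rw [sub_zero, Real.norm_eq_abs, Real.norm_eq_abs, abs_pow, pow_succ]; ring

/-- Leading term of the IQ-RBF Euler local truncation error, and second order
accuracy under the optimal shape parameter ε² = −u''(tₙ)/(2u(tₙ)). -/
theorem iq_euler_truncation_leading_term (u : ℝ → ℝ) (tn ε : ℝ)
    (hu : ContDiff ℝ 3 u) :
    ((fun h : ℝ =>
        (u (tn + h) -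
            (h * (1 + ε^2 * h^2) * (2 + ε^2 * h^2) * deriv u tn + 2 * u tn) /
              (2 * (1 + ε^2 * h^2))) / h
          - h * (iteratedDeriv 2 u tn / 2 + ε^2 * u tn))
        =O[nhds 0] fun h : ℝ => h^2) ∧
    (u tn ≠ 0 → ε^2 = -(iteratedDeriv 2 u tn) / (2 * u tn) →
      (fun h : ℝ =>
          (u (tn + h) -
              (h * (1 + ε^2 * h^2) * (2 + ε^2 * h^2) * deriv u tn + 2 * u tn) /
                (2 * (1 + ε^2 * h^2))) / h)
        =O[nhds 0] fun h : ℝ => h^2) := by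
  have h3 : ContDiff ℝ ((2:ℕ) + 1) u := by exact_mod_cast hu
  rw [contDiff_succ_iff_deriv] at h3
  obtain ⟨hu_diff, h2⟩ := h3
  have h2' : ContDiff ℝ ((1:ℕ) + 1) (deriv u) := by exact_mod_cast h2.2
  rw [contDiff_succ_iff_deriv] at h2'
  obtain ⟨hdu_diff, h1⟩ := h2'
  have hdd_diff : Differentiable ℝ (deriv (deriv u)) := h1.2.differentiable (by simp)
  set d1 : ℝ := deriv u tn with hd1
  set d2 : ℝ := iteratedDeriv 2 u tn with hd2
  have hd2' : d2 = deriv (deriv u) tn := by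
    rw [hd2, iteratedDeriv_succ, iteratedDeriv_one]
  set a : ℝ := ε ^ 2 with ha
  have ha0 : 0 ≤ a := sq_nonneg ε
  have hden : ∀ h : ℝ, (0:ℝ) < 1 + a * h ^ 2 := fun h => by positivity
  -- g1 and its derivatives
  set g1 : ℝ → ℝ := fun h => u (tn + h) - u tn - h * d1 - h ^ 2 / 2 * d2 with hg1def
  set g2 : ℝ → ℝ := fun h => deriv u (tn + h) - d1 - h * d2 with hg2def
  have hshift : ∀ h : ℝ, HasDerivAt (fun h : ℝ => u (tn + h)) (deriv u (tn + h)) h := by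
    intro h
    have := ((hu_diff (tn + h)).hasDerivAt).comp h (((hasDerivAt_id h).const_add tn))
    simpa [Function.comp_def] using this
  have hshift' : ∀ h : ℝ, HasDerivAt (fun h : ℝ => deriv u (tn + h))
      (deriv (deriv u) (tn + h)) h := by
    intro h
    have := ((hdu_diff (tn + h)).hasDerivAt).comp h (((hasDerivAt_id h).const_add tn))
    simpa [Function.comp_def] using this
  have hg1' : ∀ h : ℝ, HasDerivAt g1 (g2 h) h := by
    intro h
    have : HasDerivAt g1
        (deriv u (tn + h) - 0 - (1 * d1) - (2 * h ^ 1 / 2 * d2)) h := by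
      exact ((((hshift h).sub (hasDerivAt_const h (u tn))).sub
        ((hasDerivAt_id h).mul_const d1)).sub
        (((hasDerivAt_pow 2 h).div_const 2).mul_const d2))
    convert this using 1
    simp only [hg2def]; ring
  have hg2' : ∀ h : ℝ, HasDerivAt g2 (deriv (deriv u) (tn + h) - d2) h := by
    intro h
    have : HasDerivAt g2 (deriv (deriv u) (tn + h) - 0 - 1 * d2) h :=
      (((hshift' h).sub (hasDerivAt_const h d1)).sub ((hasDerivAt_id h).mul_const d2))
    convert this using 1; ring
  have hdg2 : deriv g2 = fun h => deriv (deriv u) (tn + h) - d2 :=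
    funext fun h => (hg2' h).deriv
  have hdg1 : deriv g1 = g2 := funext fun h => (hg1' h).deriv
  -- deriv g2 = O(h)
  have hO1 : deriv g2 =O[nhds 0] fun h : ℝ => h ^ 1 := by
    have hsub : (fun x : ℝ => deriv (deriv u) x - deriv (deriv u) tn)
        =O[nhds tn] fun x => x - tn := (hdd_diff tn).isBigO_sub
    have htend : Tendsto (fun h : ℝ => tn + h) (nhds 0) (nhds tn) := by
      have : Continuous (fun h : ℝ => tn + h) := continuous_const.add continuous_id
      simpa using this.tendsto 0
    have := hsub.comp_tendsto htend
    simp only [Function.comp_def] at this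
    rw [hdg2]
    refine this.congr (fun h => by simp [Function.comp, hd2']) (fun h => by simp)
  have hO2 : g2 =O[nhds 0] fun h : ℝ => h ^ 2 := by
    have := isBigO_succ_of_deriv (n := 1)
      (g := g2) (fun x => (hg2' x).differentiableAt) (by simp [hg2def, hd1]) hO1
    exact this
  have hO3 : g1 =O[nhds 0] fun h : ℝ => h ^ 3 := by
    have := isBigO_succ_of_deriv (n := 2)
      (g := g1) (fun x => (hg1' x).differentiableAt)
      (by simp [hg1def]) (by rw [hdg1]; exact hO2)
    exact this
  -- g1 h / h = O(h^2)
  have hdiv : (fun h : ℝ => g1 h / h) =O[nhds 0] fun h : ℝ => h ^ 2 := by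
    rw [isBigO_iff] at hO3 ⊢
    obtain ⟨C, hC⟩ := hO3
    refine ⟨C, ?_⟩
    filter_upwards [hC] with h hb
    rcases eq_or_ne h 0 with rfl | hne
    · simp
    · rw [Real.norm_eq_abs, abs_div]
      rw [div_le_iff₀ (abs_pos.mpr hne)]
      calc |g1 h| ≤ C * ‖h ^ 3‖ := hb
        _ = C * ‖h ^ 2‖ * |h| := by
            rw [Real.norm_eq_abs, Real.norm_eq_abs, abs_pow, abs_pow, pow_succ]; ring
  -- second term
  have hterm2 : (fun h : ℝ => a * h ^ 2 * d1 / 2) =O[nhds 0] fun h : ℝ => h ^ 2 := by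
    have := (isBigO_refl (fun h : ℝ => h ^ 2) (nhds 0)).const_mul_left (a * d1 / 2)
    exact this.congr (fun h => by ring) (fun h => rfl)
  -- third term
  have hterm3 : (fun h : ℝ => a ^ 2 * h ^ 3 * u tn / (1 + a * h ^ 2))
      =O[nhds 0] fun h : ℝ => h ^ 2 := by
    have hcube : (fun h : ℝ => h ^ 3) =O[nhds 0] fun h : ℝ => h ^ 2 := by
      rw [isBigO_iff]
      refine ⟨1, ?_⟩
      filter_upwards [Metric.ball_mem_nhds (0:ℝ) one_pos] with h hh
      have : |h| < 1 := by simpa [Real.dist_eq] using hh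
      rw [Real.norm_eq_abs, Real.norm_eq_abs, abs_pow, abs_pow, one_mul]
      calc |h| ^ 3 = |h| ^ 2 * |h| := by ring
        _ ≤ |h| ^ 2 * 1 := by
            exact mul_le_mul_of_nonneg_left this.le (by positivity)
        _ = |h| ^ 2 := by ring
    have hbd : (fun h : ℝ => a ^ 2 * h ^ 3 * u tn / (1 + a * h ^ 2))
        =O[nhds 0] fun h : ℝ => h ^ 3 := by
      rw [isBigO_iff]
      refine ⟨|a ^ 2 * u tn|, Eventually.of_forall fun h => ?_⟩
      have h1 : (1:ℝ) ≤ 1 + a * h ^ 2 := by nlinarith [sq_nonneg h]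
      rw [Real.norm_eq_abs, Real.norm_eq_abs, abs_div]
      rw [abs_of_pos (hden h)]
      calc |a ^ 2 * h ^ 3 * u tn| / (1 + a * h ^ 2)
          ≤ |a ^ 2 * h ^ 3 * u tn| / 1 := by
            exact div_le_div_of_nonneg_left (abs_nonneg _) one_pos h1
        _ = |a ^ 2 * u tn| * |h ^ 3| := by
            rw [div_one, show |a ^ 2 * h ^ 3 * u tn| = |a ^ 2 * u tn| * |h ^ 3| by
              rw [abs_mul, abs_mul, abs_mul]; ring]
    exact hbd.trans hcube
  -- the pointwise identity
  have key : ∀ h : ℝ,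
      (u (tn + h) -
          (h * (1 + a * h^2) * (2 + a * h^2) * d1 + 2 * u tn) /
            (2 * (1 + a * h^2))) / h - h * (d2 / 2 + a * u tn)
        = g1 h / h - a * h ^ 2 * d1 / 2 - a ^ 2 * h ^ 3 * u tn / (1 + a * h ^ 2) := by
    intro h
    rcases eq_or_ne h 0 with rfl | hne
    · simp [hg1def]
    · have hD := (hden h).ne'
      field_simp [hg1def]
      ring
  have part1 : (fun h : ℝ =>
        (u (tn + h) -
            (h * (1 + ε^2 * h^2) * (2 + ε^2 * h^2) * deriv u tn + 2 * u tn) /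
              (2 * (1 + ε^2 * h^2))) / h
          - h * (iteratedDeriv 2 u tn / 2 + ε^2 * u tn))
        =O[nhds 0] fun h : ℝ => h^2 := by
    have := (hdiv.sub hterm2).sub hterm3
    refine this.congr (fun h => ?_) (fun h => rfl)
    rw [← key h]
  refine ⟨part1, fun hut hε => ?_⟩
  have hc : d2 / 2 + a * u tn = 0 := by
    rw [hε]; field_simp; ring
  refine part1.congr (fun h => ?_) (fun h => rfl)
  have h0 : iteratedDeriv 2 u tn / 2 + ε ^ 2 * u tn = 0 := hc
  rw [h0]; ring
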